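/- Let Φ = {φ_1, ..., φ_5} be five unit vectors in ℂ^2 forming a tight frame (∑_{j=1}^5 φ_j φ_j* = (5/2)·I_2) whose coherence equals 1/√2, i.e., max_{j ≠ l} |⟨φ_j, φ_l⟩| = 1/√2. Then the angle set A_Φ = { |⟨φ_j, φ_l⟩| : j ≠ l } has at least 3 elements. -/

import Mathlib

open scoped ComplexConjugate

private lemma tg_aux (a : Fin 5 → Fin 5 → ℝ)
    (hsym : ∀ j l, a j l = a l j)
    (hajj : ∀ j, a j j = 1)
    (hrowg : ∀ j, ∑ l, (2 * a j l^2 - 1) = 0)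
    (hCS : 25 ≤ 3 * ∑ j, ∑ l, (2 * a j l^2 - 1)^2)
    (hmS : (1 / Real.sqrt 2) ∈ {r : ℝ | ∃ j l, j ≠ l ∧ a j l = r})
    (hcon : {r : ℝ | ∃ j l, j ≠ l ∧ a j l = r}.ncard < 3) : False := by
  set m : ℝ := 1 / Real.sqrt 2 with hmdef
  set S : Set ℝ := {r : ℝ | ∃ j l, j ≠ l ∧ a j l = r} with hSdef
  have hfin : S.Finite := by
    apply Set.Finite.subset (Set.finite_range (fun jl : Fin 5 × Fin 5 => a jl.1 jl.2))
    rw [hSdef]; rintro r ⟨j, l, -, h⟩; exact ⟨(j, l), h⟩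
  have hno3 : ∀ x ∈ S, ∀ y ∈ S, ∀ z ∈ S, x = y ∨ x = z ∨ y = z := by
    intro x hx y hy z hz
    by_contra hc
    push_neg at hc
    obtain ⟨hxy, hxz, hyz⟩ := hc
    have hsub : ({x, y, z} : Set ℝ) ⊆ S := by
      intro t ht; rcases ht with h|h|h <;> simp_all
    have h3 : ({x, y, z} : Set ℝ).ncard = 3 := by
      rw [Set.ncard_insert_of_notMem (by simp [hxy, hxz]) (by
        exact (Set.finite_singleton z).insert y), Set.ncard_pair hyz]
    have := Set.ncard_le_ncard hsub hfin
    omega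
  have hb : ∃ b, ∀ x ∈ S, x = m ∨ x = b := by
    by_cases hex : ∃ x ∈ S, x ≠ m
    · obtain ⟨b, hbS, hbm⟩ := hex
      refine ⟨b, fun x hx => ?_⟩
      rcases hno3 x hx m hmS b hbS with h|h|h
      · exact Or.inl h
      · exact Or.inr h
      · exact absurd h.symm hbm
    · push_neg at hex
      exact ⟨m, fun x hx => Or.inl (hex x hx)⟩
  obtain ⟨b, hball⟩ := hb
  set e : ℝ := 1 - 2 * b^2 with hedef
  have hm2 : 2 * m^2 - 1 = 0 := by
    rw [hmdef, div_pow, one_pow, Real.sq_sqrt (by norm_num)]; norm_num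
  set W : Fin 5 → Fin 5 → ℕ := fun j l => if j = l then 0 else if a j l = m then 0 else 1
    with hWdef
  have hWval : ∀ j l, (2 * a j l^2 - 1) = (if j = l then (1:ℝ) else 0) - e * W j l := by
    intro j l
    by_cases hjl : j = l
    · subst hjl; simp [hWdef, hajj]; norm_num
    · by_cases hal : a j l = m
      · simp [hWdef, hjl, hal, hm2]
      · have hab : a j l = b := by
          rcases hball (a j l) (by rw [hSdef]; exact ⟨j, l, hjl, rfl⟩) with h|h
          · exact absurd h hal
          · exact h
        have hW1 : W j l = 1 := by simp [hWdef, hjl, hal]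
        rw [hW1, hab, if_neg hjl]; push_cast; ring
  have hWsq : ∀ j l, (2 * a j l^2 - 1)^2 = (if j = l then (1:ℝ) else 0) + e^2 * W j l := by
    intro j l
    by_cases hjl : j = l
    · subst hjl; simp [hWdef, hajj]; norm_num
    · by_cases hal : a j l = m
      · simp [hWdef, hjl, hal, hm2]
      · have hab : a j l = b := by
          rcases hball (a j l) (by rw [hSdef]; exact ⟨j, l, hjl, rfl⟩) with h|h
          · exact absurd h hal
          · exact h
        have hW1 : W j l = 1 := by simp [hWdef, hjl, hal]
        rw [hW1, hab, if_neg hjl]; push_cast; ring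
  have hrowW : ∀ j, e * ∑ l, ((W j l : ℕ) : ℝ) = 1 := by
    intro j
    have h0 := hrowg j
    rw [Finset.sum_congr rfl (fun l _ => hWval j l), Finset.sum_sub_distrib,
      Finset.sum_ite_eq Finset.univ j (fun _ => (1:ℝ)), ← Finset.mul_sum] at h0
    simp at h0
    linarith
  have hsq : ∑ j, ∑ l, (2 * a j l^2 - 1)^2 = 5 + 5 * e := by
    have hrow : ∀ j, ∑ l, (2 * a j l^2 - 1)^2 = 1 + e := by
      intro j
      rw [Finset.sum_congr rfl (fun l _ => hWsq j l), Finset.sum_add_distrib,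
        Finset.sum_ite_eq Finset.univ j (fun _ => (1:ℝ)), ← Finset.mul_sum]
      have := hrowW j
      simp only [Finset.mem_univ, if_true]
      nlinarith [this]
    rw [Finset.sum_congr rfl (fun j _ => hrow j)]
    simp [Finset.sum_const]
  have he23 : 2/3 ≤ e := by rw [hsq] at hCS; linarith
  have hn : ∀ j, ∑ l, W j l = 1 := by
    intro j
    have h1 : e * ((∑ l, W j l : ℕ) : ℝ) = 1 := by
      rw [Nat.cast_sum]; exact hrowW j
    by_contra hne
    rcases Nat.lt_or_ge (∑ l, W j l) 2 with h|h
    · interval_cases h2 : (∑ l, W j l) <;> simp_all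
    · have : ((∑ l, W j l : ℕ) : ℝ) ≥ 2 := by exact_mod_cast h
      nlinarith
  have htot : ∑ j, ∑ l, W j l = 5 := by simp [hn]
  have hWsym : ∀ j l, W j l = W l j := by
    intro j l
    by_cases hjl : j = l
    · rw [hjl]
    · simp [hWdef, hjl, Ne.symm hjl, hsym j l]
  have hdW : ∀ j, W j j = 0 := by intro j; simp [hWdef]
  simp only [Fin.sum_univ_five] at htot
  have s01 := hWsym 0 1; have s02 := hWsym 0 2; have s03 := hWsym 0 3; have s04 := hWsym 0 4
  have s12 := hWsym 1 2; have s13 := hWsym 1 3; have s14 := hWsym 1 4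
  have s23 := hWsym 2 3; have s24 := hWsym 2 4; have s34 := hWsym 3 4
  have d0 := hdW 0; have d1 := hdW 1; have d2 := hdW 2; have d3 := hdW 3; have d4 := hdW 4
  omega

/-- A tight Grassmannian frame of `5` vectors in `ℂ²` has at least
three distinct frame angles: if `φ_1, ..., φ_5` are unit vectors in `ℂ²` forming a
tight frame (`∑ j, φ_j φ_j* = (5/2) • I`) whose coherence equals `1/√2`, then the angle
set `{ |⟨φ_j, φ_l⟩| : j ≠ l }` has at least `3` elements. -/
theorem tight_grassmannian_5_2_triangular
    (φ : Fin 5 → EuclideanSpace ℂ (Fin 2))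
    (hunit : ∀ j, ‖φ j‖ = 1)
    (htight : ∀ x : EuclideanSpace ℂ (Fin 2),
      ∑ j, (inner ℂ (φ j) x : ℂ) • φ j = (5 / 2 : ℂ) • x)
    (hcoh : IsGreatest {r : ℝ | ∃ j l, j ≠ l ∧ ‖(inner ℂ (φ j) (φ l) : ℂ)‖ = r}
      (1 / Real.sqrt 2)) :
    3 ≤ {r : ℝ | ∃ j l, j ≠ l ∧ ‖(inner ℂ (φ j) (φ l) : ℂ)‖ = r}.ncard := by
  by_contra hcon
  push_neg at hcon
  have hinner : ∀ j l, (inner ℂ (φ j) (φ l) : ℂ)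
      = conj (φ j 0) * φ l 0 + conj (φ j 1) * φ l 1 := by
    intro j l; rw [PiLp.inner_apply, Fin.sum_univ_two, RCLike.inner_apply, RCLike.inner_apply]; ring
  have hnormSq : ∀ z : ℂ, ‖z‖^2 = z.re^2 + z.im^2 := by
    intro z; rw [Complex.sq_norm, Complex.normSq_apply]; ring
  have hC1 : ∀ j, (φ j 0).re^2 + (φ j 0).im^2 + (φ j 1).re^2 + (φ j 1).im^2 = 1 := by
    intro j
    have h2 : (inner ℂ (φ j) (φ j) : ℂ) = 1 := by
      rw [inner_self_eq_norm_sq_to_K, hunit j]; norm_num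
    rw [hinner] at h2
    have h3 := congrArg Complex.re h2
    simp only [Complex.add_re, Complex.mul_re, Complex.conj_re, Complex.conj_im,
      Complex.one_re] at h3
    nlinarith [h3]
  have key : ∀ k mm : Fin 2, ∑ j, conj (φ j k) * φ j mm
      = if k = mm then (5/2:ℂ) else 0 := by
    intro k mm
    have h := congrArg (fun v => (inner ℂ (EuclideanSpace.single mm (1:ℂ)) v : ℂ))
      (htight (EuclideanSpace.single k 1))
    simp only [inner_sum, inner_smul_right, EuclideanSpace.inner_single_left,
      EuclideanSpace.inner_single_right, map_one, one_mul, mul_one,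
      EuclideanSpace.single_apply] at h
    rw [h]; split_ifs <;> simp
  set y : Fin 5 → Fin 3 → ℝ := fun j => ![2*((φ j 0).re*(φ j 1).re + (φ j 0).im*(φ j 1).im),
      2*((φ j 0).im*(φ j 1).re - (φ j 0).re*(φ j 1).im),
      (φ j 0).re^2+(φ j 0).im^2-(φ j 1).re^2-(φ j 1).im^2] with hydef
  have hg : ∀ j l, 2 * ‖(inner ℂ (φ j) (φ l) : ℂ)‖^2 - 1 = ∑ k, y j k * y l k := by
    intro j l
    rw [hinner, hnormSq]
    simp only [hydef, Fin.sum_univ_three, Matrix.cons_val_zero, Matrix.cons_val_one,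
      Matrix.head_cons, Matrix.cons_val_two, Matrix.tail_cons,
      Complex.add_re, Complex.add_im, Complex.mul_re, Complex.mul_im,
      Complex.conj_re, Complex.conj_im]
    linear_combination ((φ l 0).re^2 + (φ l 0).im^2 + (φ l 1).re^2 + (φ l 1).im^2) * hC1 j
      + hC1 l
  have k00 := congrArg Complex.re (key 0 0)
  have k11 := congrArg Complex.re (key 1 1)
  have k01re := congrArg Complex.re (key 0 1)
  have k01im := congrArg Complex.im (key 0 1)
  simp only [Complex.re_sum, Complex.im_sum, Complex.mul_re, Complex.mul_im,
    Complex.conj_re, Complex.conj_im, if_true, if_false, reduceIte,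
    Complex.ofReal_re] at k00 k11 k01re k01im
  norm_num at k00 k11 k01re k01im
  have hsy0 : ∑ j, y j (0 : Fin 3) = 0 := by
    simp only [hydef, Matrix.cons_val_zero]
    rw [← Finset.mul_sum, k01re, mul_zero]
  have hsy1 : ∑ j, y j (1 : Fin 3) = 0 := by
    simp only [hydef, Matrix.cons_val_one, Matrix.head_cons, Matrix.cons_val_zero]
    rw [show (∑ x : Fin 5, 2*((φ x 0).im*(φ x 1).re - (φ x 0).re*(φ x 1).im))
        = ∑ x : Fin 5, (-2)*((φ x 0).re * (φ x 1).im + -((φ x 0).im * (φ x 1).re))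
        from Finset.sum_congr rfl (fun x _ => by ring), ← Finset.mul_sum, k01im, mul_zero]
  have hsy2 : ∑ j, y j (2 : Fin 3) = 0 := by
    simp only [hydef, Matrix.cons_val_two, Matrix.tail_cons, Matrix.head_cons]
    rw [show (∑ x : Fin 5, ((φ x 0).re^2+(φ x 0).im^2-(φ x 1).re^2-(φ x 1).im^2))
        = ∑ x : Fin 5, (((φ x 0).re*(φ x 0).re + (φ x 0).im*(φ x 0).im)
            - ((φ x 1).re*(φ x 1).re + (φ x 1).im*(φ x 1).im))
        from Finset.sum_congr rfl (fun x _ => by ring),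
      Finset.sum_sub_distrib, k00, k11, sub_self]
  have hsumy : ∀ k, ∑ j, y j k = 0 := by
    intro k
    fin_cases k
    · exact hsy0
    · exact hsy1
    · exact hsy2
  have hajj : ∀ j, ‖(inner ℂ (φ j) (φ j) : ℂ)‖ = 1 := by
    intro j
    have h2 : (inner ℂ (φ j) (φ j) : ℂ) = 1 := by
      rw [inner_self_eq_norm_sq_to_K, hunit j]; norm_num
    rw [h2]; norm_num
  have hdiag : ∀ j, ∑ k, y j k * y j k = 1 := by
    intro j
    have := hg j j
    rw [hajj j] at this
    nlinarith [this]
  have hrowg : ∀ j, ∑ l, (2 * ‖(inner ℂ (φ j) (φ l) : ℂ)‖^2 - 1) = 0 := by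
    intro j
    calc ∑ l, (2 * ‖(inner ℂ (φ j) (φ l) : ℂ)‖^2 - 1) = ∑ l, ∑ k, y j k * y l k :=
          Finset.sum_congr rfl (fun l _ => hg j l)
      _ = ∑ k, ∑ l, y j k * y l k := Finset.sum_comm
      _ = ∑ k : Fin 3, y j k * ∑ l, y l k := by
          refine Finset.sum_congr rfl (fun k _ => ?_); rw [Finset.mul_sum]
      _ = 0 := by simp [hsumy]
  have hCS : 25 ≤ 3 * ∑ j, ∑ l, (2 * ‖(inner ℂ (φ j) (φ l) : ℂ)‖^2 - 1)^2 := by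
    have hrw : ∑ j, ∑ l, (2 * ‖(inner ℂ (φ j) (φ l) : ℂ)‖^2 - 1)^2
        = ∑ j, ∑ l, (∑ k, y j k * y l k)^2 :=
      Finset.sum_congr rfl (fun j _ => Finset.sum_congr rfl (fun l _ => by rw [hg j l]))
    rw [hrw]
    have step1 : ∑ j, ∑ l, (∑ k, y j k * y l k)^2
        = ∑ k : Fin 3, ∑ k' : Fin 3, (∑ j, y j k * y j k')^2 := by
      simp only [Fin.sum_univ_five, Fin.sum_univ_three]; ring
    have tr : ∑ k : Fin 3, (∑ j, y j k * y j k) = 5 := by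
      rw [Finset.sum_comm]
      simp [hdiag]
    rw [step1]
    simp only [Fin.sum_univ_three] at tr ⊢
    nlinarith [sq_nonneg ((∑ j, y j 0 * y j 1)), sq_nonneg ((∑ j, y j 0 * y j 2)),
      sq_nonneg ((∑ j, y j 1 * y j 2)), sq_nonneg ((∑ j, y j 1 * y j 0)),
      sq_nonneg ((∑ j, y j 2 * y j 0)), sq_nonneg ((∑ j, y j 2 * y j 1)),
      sq_nonneg (∑ j, y j 0 * y j 0 - ∑ j, y j 1 * y j 1),
      sq_nonneg (∑ j, y j 0 * y j 0 - ∑ j, y j 2 * y j 2),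
      sq_nonneg (∑ j, y j 1 * y j 1 - ∑ j, y j 2 * y j 2), tr]
  have hsym : ∀ j l, ‖(inner ℂ (φ j) (φ l) : ℂ)‖ = ‖(inner ℂ (φ l) (φ j) : ℂ)‖ := by
    intro j l
    exact norm_inner_symm (φ j) (φ l)
  exact tg_aux (fun j l => ‖(inner ℂ (φ j) (φ l) : ℂ)‖) hsym hajj hrowg hCS hcoh.1 hcon
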